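/- arXiv:2009.11526 — 2 statements merged into one kernel-verified Lean document; each statement's English description precedes it below -/
import Mathlib

section
/- Let (X, 𝓑, μ, f) be a dissipative system of bounded distortion generated by W. If sup { μ(f^{k−1}(W))/μ(f^k(W)), μ(f^{k+1}(W))/μ(f^k(W)) : k ∈ ℤ } is finite, then both f and f⁻¹ satisfy condition (⋆). -/
open MeasureTheory Filter Set Function Topology ENNReal

noncomputable section

namespace GHShadow

/-- The shadowing property for an invertible bounded linear operator. -/
def HasShadowing {E : Type*} [NormedAddCommGroup E] [NormedSpace ℝ E]
    (T : E ≃L[ℝ] E) : Prop :=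
  ∀ ε : ℝ, 0 < ε → ∃ δ : ℝ, 0 < δ ∧ ∀ x : ℤ → E,
    (∀ n : ℤ, ‖T (x n) - x (n + 1)‖ ≤ δ) →
      ∃ y : E, ∀ n : ℤ, ‖(T ^ n) y - x n‖ < ε

/-- `lim ‖Tⁿ‖^{1/n}` exists and is `< 1`. -/
def SpectralRadiusLtOne {E : Type*} [NormedAddCommGroup E] [NormedSpace ℝ E]
    (T : E →L[ℝ] E) : Prop :=
  ∃ r : ℝ, r < 1 ∧ Tendsto (fun n : ℕ => ‖T ^ n‖ ^ (1 / (n : ℝ))) atTop (nhds r)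

/-- The restriction of `T` to `M` has spectral radius `< 1`
(equivalently, is a proper contraction in an equivalent norm). -/
def ContractsOn {E : Type*} [NormedAddCommGroup E] [NormedSpace ℝ E]
    (T : E ≃L[ℝ] E) (M : Submodule ℝ E) : Prop :=
  ∃ C : ℝ, 0 < C ∧ ∃ t : ℝ, 0 < t ∧ t < 1 ∧
    ∀ n : ℕ, ∀ x ∈ M, ‖(T ^ n) x‖ ≤ C * t ^ n * ‖x‖

def GeneralizedHyperbolic {E : Type*} [NormedAddCommGroup E] [NormedSpace ℝ E]
    (T : E ≃L[ℝ] E) : Prop :=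
  ∃ M N : Submodule ℝ E, IsClosed (M : Set E) ∧ IsClosed (N : Set E) ∧
    IsCompl M N ∧ (∀ x ∈ M, T x ∈ M) ∧ (∀ x ∈ N, T.symm x ∈ N) ∧
    ContractsOn T M ∧ ContractsOn T.symm N

variable {X : Type*} [MeasurableSpace X]

/-- image of `B` under the `k`-th iterate of the invertible map `f`. -/
def img (f : Equiv.Perm X) (k : ℤ) (B : Set X) : Set X := ⇑(f ^ k) '' B

/-- `(X, 𝓑, μ, f)` is a dissipative system generated by `W`. -/
structure IsDissipative (μ : Measure X) (f : Equiv.Perm X) (W : Set X) : Prop where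
  sigmaFin : SigmaFinite μ
  meas_f : Measurable f
  meas_symm : Measurable f.symm
  meas_W : MeasurableSet W
  pos : 0 < μ W
  fin : μ W < ⊤
  disj : Pairwise fun k l : ℤ => Disjoint (img f k W) (img f l W)
  cover : (⋃ k : ℤ, img f k W) = univ

/-- `f` is of bounded distortion on `W` with constant `K`. -/
def BoundedDistortion (μ : Measure X) (f : Equiv.Perm X) (W : Set X) (K : ℝ≥0∞) : Prop :=
  ∀ k : ℤ, ∀ B : Set X, MeasurableSet B → B ⊆ W →
    (1 / K) * (μ (img f k W) * μ B) ≤ μ (img f k B) * μ W ∧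
      μ (img f k B) * μ W ≤ K * (μ (img f k W) * μ B)

/-- condition (⋆) for a transformation `g`. -/
def CondStar (μ : Measure X) (g : X → X) : Prop :=
  ∃ c : ℝ≥0∞, 0 < c ∧ c ≠ ⊤ ∧ ∀ B : Set X, MeasurableSet B → μ (g ⁻¹' B) ≤ c * μ B

/-- condition 𝓗𝓒. -/
def CondHC (μ : Measure X) (f : Equiv.Perm X) (W : Set X) : Prop :=
  limsup (fun n : ℕ =>
    ⨆ k : ℤ, (μ (img f k W) / μ (img f (k + (n : ℤ)) W)) ^ (1 / (n : ℝ))) atTop < 1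

/-- condition 𝓗𝓓. -/
def CondHD (μ : Measure X) (f : Equiv.Perm X) (W : Set X) : Prop :=
  1 < liminf (fun n : ℕ =>
    ⨅ k : ℤ, (μ (img f k W) / μ (img f (k + (n : ℤ)) W)) ^ (1 / (n : ℝ))) atTop

/-- condition 𝓖𝓗. -/
def CondGH (μ : Measure X) (f : Equiv.Perm X) (W : Set X) : Prop :=
  limsup (fun n : ℕ =>
      ⨆ m : ℕ, (μ (img f (-(m : ℤ) - (n : ℤ)) W) / μ (img f (-(m : ℤ)) W)) ^ (1 / (n : ℝ)))
      atTop < 1 ∧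
  1 < liminf (fun n : ℕ =>
      ⨅ m : ℕ, (μ (img f (m : ℤ) W) / μ (img f ((m : ℤ) + (n : ℤ)) W)) ^ (1 / (n : ℝ))) atTop

/-- `T` represents the composition operator `φ ↦ φ ∘ f` on `L^p(X,μ)`. -/
def RepsComp (μ : Measure X) (p : ℝ≥0∞) [Fact (1 ≤ p)] (f : X → X)
    (T : Lp ℝ p μ ≃L[ℝ] Lp ℝ p μ) : Prop :=
  ∀ φ : Lp ℝ p μ, ⇑(T φ) =ᵐ[μ] fun x => (φ : X → ℝ) (f x)


set_option linter.unusedSectionVars false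

lemma meas_zpow (f : Equiv.Perm X) (hf : Measurable f) (hfs : Measurable f.symm) (k : ℤ) :
    Measurable ⇑(f ^ k) := by
  induction k using Int.induction_on with
  | zero => simpa using measurable_id
  | succ n ih => rw [zpow_add_one]; exact ih.comp hf
  | pred n ih => rw [zpow_sub_one]; exact ih.comp hfs

lemma img_img (f : Equiv.Perm X) (j k : ℤ) (B : Set X) :
    img f j (img f k B) = img f (j + k) B := by
  unfold img; rw [← Set.image_comp, ← Equiv.Perm.coe_mul, ← zpow_add]

lemma img_zero (f : Equiv.Perm X) (B : Set X) : img f 0 B = B := by simp [img]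

lemma img_measurable (f : Equiv.Perm X) (hf : Measurable f) (hfs : Measurable f.symm)
    (k : ℤ) {B : Set X} (hB : MeasurableSet B) : MeasurableSet (img f k B) := by
  have : img f k B = ⇑(f ^ (-k)) ⁻¹' B := by
    unfold img
    rw [Equiv.image_eq_preimage_symm]
    congr 1
    rw [zpow_neg]
    rfl
  rw [this]
  exact (meas_zpow f hf hfs (-k)) hB

lemma img_mono (f : Equiv.Perm X) (k : ℤ) {A B : Set X} (h : A ⊆ B) :
    img f k A ⊆ img f k B := Set.image_mono h

/-- Proposition `diststar`, part 2: if the ratios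
`μ(f^{k∓1}(W))/μ(f^k(W))` are uniformly bounded, then both `f` and `f⁻¹` satisfy
condition (⋆). -/
theorem condStar_of_bounded_ratios
    {X : Type*} [MeasurableSpace X] (μ : Measure X) (f : Equiv.Perm X) (W : Set X)
    (hdiss : IsDissipative μ f W)
    (K : ℝ≥0∞) (hK0 : 0 < K) (hKfin : K ≠ ⊤)
    (hbd : BoundedDistortion μ f W K)
    (hsup : ∃ M : ℝ≥0∞, M ≠ ⊤ ∧ ∀ k : ℤ,
      μ (img f (k - 1) W) / μ (img f k W) ≤ M ∧
      μ (img f (k + 1) W) / μ (img f k W) ≤ M) :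
    CondStar μ f ∧ CondStar μ f.symm := by
  obtain ⟨M, hMfin, hM⟩ := hsup
  have hf := hdiss.meas_f
  have hfs := hdiss.meas_symm
  have hw0 : μ W ≠ 0 := hdiss.pos.ne'
  have hwt : μ W ≠ ⊤ := hdiss.fin.ne
  -- all pieces have positive finite measure
  have hpiece : ∀ k : ℤ, μ (img f k W) ≠ 0 ∧ μ (img f k W) ≠ ⊤ := by
    intro k
    induction k using Int.induction_on with
    | zero => rw [img_zero]; exact ⟨hw0, hwt⟩
    | succ n ih =>
      constructor
      · intro h0
        have := (hM ((n : ℤ) + 1)).1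
        simp only [add_sub_cancel_right] at this
        rw [h0, ENNReal.div_zero ih.1] at this
        exact hMfin (top_le_iff.mp this)
      · have := (hM (n : ℤ)).2
        have h1 : μ (img f ((n : ℤ) + 1) W) ≤ M * μ (img f (n : ℤ) W) :=
          (ENNReal.div_le_iff_le_mul (Or.inl ih.1) (Or.inl ih.2)).mp this
        exact (h1.trans_lt (ENNReal.mul_lt_top hMfin.lt_top ih.2.lt_top)).ne
    | pred n ih =>
      constructor
      · intro h0
        have := (hM (-(n : ℤ) - 1)).2
        simp only [sub_add_cancel] at this
        rw [h0, ENNReal.div_zero ih.1] at this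
        exact hMfin (top_le_iff.mp this)
      · have := (hM (-(n : ℤ))).1
        have h1 : μ (img f (-(n : ℤ) - 1) W) ≤ M * μ (img f (-(n : ℤ)) W) :=
          (ENNReal.div_le_iff_le_mul (Or.inl ih.1) (Or.inl ih.2)).mp this
        exact (h1.trans_lt (ENNReal.mul_lt_top hMfin.lt_top ih.2.lt_top)).ne
  -- key estimate
  have key : ∀ (k l : ℤ) (B₀ : Set X), MeasurableSet B₀ → B₀ ⊆ W →
      μ (img f l W) ≤ (M + 1) * μ (img f k W) →
      μ (img f l B₀) ≤ K * K * (M + 1) * μ (img f k B₀) := by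
    intro k l B₀ hB₀m hB₀ hratio
    obtain ⟨hb0, hbt⟩ := hpiece k
    have h1 := (hbd l B₀ hB₀m hB₀).2
    have h2 := (hbd k B₀ hB₀m hB₀).1
    -- from h2 : μ(img f k W) * μ B₀ ≤ K * (μ (img f k B₀) * μ W)
    have h2' : μ (img f k W) * μ B₀ ≤ K * (μ (img f k B₀) * μ W) := by
      calc μ (img f k W) * μ B₀
          = K * ((1 / K) * (μ (img f k W) * μ B₀)) := by
            rw [← mul_assoc, one_div, ENNReal.mul_inv_cancel hK0.ne' hKfin, one_mul]
        _ ≤ K * (μ (img f k B₀) * μ W) := mul_le_mul_right h2 K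
    have main : μ (img f l B₀) * (μ W * μ (img f k W)) ≤
        (K * K * (M + 1) * μ (img f k B₀)) * (μ W * μ (img f k W)) := by
      calc μ (img f l B₀) * (μ W * μ (img f k W))
          = (μ (img f l B₀) * μ W) * μ (img f k W) := by ring
        _ ≤ (K * (μ (img f l W) * μ B₀)) * μ (img f k W) := mul_le_mul_left h1 _
        _ ≤ (K * (((M + 1) * μ (img f k W)) * μ B₀)) * μ (img f k W) := by
            exact mul_le_mul_left (mul_le_mul_right (mul_le_mul_left hratio _) K) _
        _ = (K * (M + 1) * μ (img f k W)) * (μ (img f k W) * μ B₀) := by ring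
        _ ≤ (K * (M + 1) * μ (img f k W)) * (K * (μ (img f k B₀) * μ W)) :=
            mul_le_mul_right h2' _
        _ = (K * K * (M + 1) * μ (img f k B₀)) * (μ W * μ (img f k W)) := by ring
    have hc0 : μ W * μ (img f k W) ≠ 0 := by
      simp [hw0, hb0]
    have hct : μ W * μ (img f k W) ≠ ⊤ := ENNReal.mul_ne_top hwt hbt
    exact (ENNReal.mul_le_mul_iff_left hc0 hct).mp main
  -- the constant
  set c : ℝ≥0∞ := K * K * (M + 1) with hc
  have hc0 : 0 < c := by
    apply ENNReal.mul_pos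
    · exact (ENNReal.mul_pos hK0.ne' hK0.ne').ne'
    · simp
  have hct : c ≠ ⊤ := by
    apply ENNReal.mul_ne_top (ENNReal.mul_ne_top hKfin hKfin)
    exact ENNReal.add_ne_top.mpr ⟨hMfin, one_ne_top⟩
  -- the core: per-piece estimate then summation
  have core : ∀ (d : ℤ), (∀ k : ℤ, μ (img f (k + d) W) ≤ (M + 1) * μ (img f k W)) →
      ∀ B : Set X, MeasurableSet B → μ (img f d B) ≤ c * μ B := by
    intro d hd B hB
    have hBk_meas : ∀ k : ℤ, MeasurableSet (B ∩ img f k W) :=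
      fun k => hB.inter (img_measurable f hf hfs k hdiss.meas_W)
    have hBunion : B = ⋃ k : ℤ, B ∩ img f k W := by
      rw [← Set.inter_iUnion, hdiss.cover, Set.inter_univ]
    have hBdisj : Pairwise (Function.onFun Disjoint fun k : ℤ => B ∩ img f k W) := by
      intro k l hkl
      exact ((hdiss.disj hkl).mono inter_subset_right inter_subset_right)
    have perpiece : ∀ k : ℤ, μ (img f d (B ∩ img f k W)) ≤ c * μ (B ∩ img f k W) := by
      intro k
      set Bk := B ∩ img f k W with hBkdef
      set B₀ := img f (-k) Bk with hB₀def
      have hB₀m : MeasurableSet B₀ := img_measurable f hf hfs _ (hBk_meas k)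
      have hB₀W : B₀ ⊆ W := by
        have : B₀ ⊆ img f (-k) (img f k W) := img_mono f _ inter_subset_right
        rwa [img_img, neg_add_cancel, img_zero] at this
      have hBk_eq : img f k B₀ = Bk := by rw [hB₀def, img_img, add_neg_cancel, img_zero]
      have himg : img f d Bk = img f (k + d) B₀ := by
        rw [← hBk_eq, img_img, add_comm d k]
      rw [himg, ← hBk_eq]
      exact key k (k + d) B₀ hB₀m hB₀W (hd k)
    calc μ (img f d B) = μ (⋃ k : ℤ, img f d (B ∩ img f k W)) := by
          conv_lhs => rw [hBunion]
          rw [img, Set.image_iUnion]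
          rfl
      _ ≤ ∑' k : ℤ, μ (img f d (B ∩ img f k W)) := measure_iUnion_le _
      _ ≤ ∑' k : ℤ, c * μ (B ∩ img f k W) := ENNReal.tsum_le_tsum perpiece
      _ = c * ∑' k : ℤ, μ (B ∩ img f k W) := ENNReal.tsum_mul_left
      _ = c * μ B := by rw [← measure_iUnion hBdisj hBk_meas, ← hBunion]
  have ratio_le : ∀ (k : ℤ), μ (img f (k - 1) W) ≤ (M + 1) * μ (img f k W) ∧
      μ (img f (k + 1) W) ≤ (M + 1) * μ (img f k W) := by
    intro k
    obtain ⟨hb0, hbt⟩ := hpiece k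
    constructor
    · exact (ENNReal.div_le_iff_le_mul (Or.inl hb0) (Or.inl hbt)).mp
        ((hM k).1.trans (le_self_add))
    · exact (ENNReal.div_le_iff_le_mul (Or.inl hb0) (Or.inl hbt)).mp
        ((hM k).2.trans (le_self_add))
  constructor
  · refine ⟨c, hc0, hct, fun B hB => ?_⟩
    have : f ⁻¹' B = img f (-1) B := by
      unfold img
      rw [zpow_neg, zpow_one, Equiv.Perm.inv_def, Equiv.image_eq_preimage_symm]
      rfl
    rw [this]
    apply core (-1) _ B hB
    intro k
    have := (ratio_le k).1
    rwa [show k - 1 = k + (-1) by ring] at this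
  · refine ⟨c, hc0, hct, fun B hB => ?_⟩
    have : f.symm ⁻¹' B = img f 1 B := by
      unfold img
      rw [zpow_one, Equiv.image_eq_preimage_symm]
    rw [this]
    exact core 1 (fun k => (ratio_le k).2) B hB


end GHShadow
end
end

section
/- Let S be an invertible bounded linear operator on a Banach space X and T an invertible bounded linear operator on a Banach space Y, and suppose T is a factor of S via a factor map Π : X → Y that admits a bounded selector. If S has the shadowing property, then T has the shadowing property. -/
open MeasureTheory Filter Set Function Topology ENNReal

noncomputable section

namespace GHShadow

variable {X : Type*} [MeasurableSpace X]

lemma commz {E F : Type*} [NormedAddCommGroup E] [NormedSpace ℝ E]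
    [NormedAddCommGroup F] [NormedSpace ℝ F]
    (S : E ≃L[ℝ] E) (T : F ≃L[ℝ] F) (Pi : E →L[ℝ] F)
    (hcomm : ∀ x : E, Pi (S x) = T (Pi x)) :
    ∀ (n : ℤ) (x : E), Pi ((S ^ n) x) = (T ^ n) (Pi x) := by
  have hsymm : ∀ x : E, Pi (S.symm x) = T.symm (Pi x) := by
    intro x
    have := hcomm (S.symm x)
    rw [S.apply_symm_apply] at this
    rw [this, T.symm_apply_apply]
  intro n
  induction n using Int.induction_on with
  | zero => intro x; rfl
  | succ k ih =>
      intro x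
      have h1 : (S ^ ((k : ℤ) + 1)) x = (S ^ (k : ℤ)) (S x) := by
        rw [zpow_add_one]; rfl
      have h2 : (T ^ ((k : ℤ) + 1)) (Pi x) = (T ^ (k : ℤ)) (T (Pi x)) := by
        rw [zpow_add_one]; rfl
      rw [h1, h2, ih, hcomm]
  | pred k ih =>
      intro x
      have h1 : (S ^ (-(k : ℤ) - 1)) x = (S ^ (-(k : ℤ))) (S.symm x) := by
        rw [zpow_sub_one]; rfl
      have h2 : (T ^ (-(k : ℤ) - 1)) (Pi x) = (T ^ (-(k : ℤ))) (T.symm (Pi x)) := by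
        rw [zpow_sub_one]; rfl
      rw [h1, h2, ih, hsymm]


/-- Lemma `shadowfactor`: if `T` is a factor of `S` via a factor map
`Π` admitting a bounded selector and `S` has the shadowing property, then so does `T`. -/
theorem shadowing_of_factor
    {E F : Type*} [NormedAddCommGroup E] [NormedSpace ℝ E] [CompleteSpace E]
    [NormedAddCommGroup F] [NormedSpace ℝ F] [CompleteSpace F]
    (S : E ≃L[ℝ] E) (T : F ≃L[ℝ] F) (Pi : E →L[ℝ] F)
    (hsurj : Function.Surjective Pi)
    (hcomm : ∀ x : E, Pi (S x) = T (Pi x))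
    (hsel : ∃ L : ℝ, 0 < L ∧ ∀ y : F, ∃ x : E, Pi x = y ∧ ‖x‖ ≤ L * ‖y‖)
    (hS : HasShadowing S) :
    HasShadowing T := by
  obtain ⟨L, hL, hsel⟩ := hsel
  intro ε hε
  have hPi1 : (0:ℝ) < ‖Pi‖ + 1 := by positivity
  obtain ⟨δS, hδS, hshad⟩ := hS (ε / (‖Pi‖ + 1)) (by positivity)
  refine ⟨δS / L, by positivity, ?_⟩
  intro x hx
  set e : ℤ → E := fun n => Classical.choose (hsel (x (n+1) - T (x n))) with he
  have heP : ∀ n, Pi (e n) = x (n+1) - T (x n) := fun n =>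
    (Classical.choose_spec (hsel _)).1
  have heN : ∀ n, ‖e n‖ ≤ δS := by
    intro n
    calc ‖e n‖ ≤ L * ‖x (n+1) - T (x n)‖ := (Classical.choose_spec (hsel _)).2
    _ ≤ L * (δS / L) := by
        gcongr
        rw [norm_sub_rev]; exact hx n
    _ = δS := by field_simp
  obtain ⟨x0, hx0⟩ := hsurj (x 0)
  let v : ℕ → E := fun k => Nat.rec x0 (fun k vk => S vk + e k) k
  let w : ℕ → E := fun k => Nat.rec x0 (fun k wk => S.symm (wk - e (-(k:ℤ)-1))) k
  let u : ℤ → E := fun n => match n with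
    | Int.ofNat k => v k
    | Int.negSucc k => w (k+1)
  have hustep : ∀ n : ℤ, u (n + 1) = S (u n) + e n := by
    intro n
    match n with
    | Int.ofNat k =>
        show u ((k:ℤ) + 1) = S (v k) + e (Int.ofNat k)
        have : ((k:ℤ) + 1) = Int.ofNat (k+1) := by simp
        rw [this]
    | Int.negSucc 0 =>
        show u 0 = S (w 1) + e (Int.negSucc 0)
        have hw1 : w 1 = S.symm (x0 - e (-(0:ℤ)-1)) := rfl
        show v 0 = S (w 1) + e (Int.negSucc 0)
        rw [hw1, S.apply_symm_apply]
        have : (-(0:ℤ)-1) = Int.negSucc 0 := rfl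
        rw [this]
        show x0 = x0 - e (Int.negSucc 0) + e (Int.negSucc 0)
        abel
    | Int.negSucc (k+1) =>
        show u (Int.negSucc k) = S (w (k+2)) + e (Int.negSucc (k+1))
        have hw : w (k+2) = S.symm (w (k+1) - e (-((k+1):ℤ)-1)) := rfl
        show w (k+1) = S (w (k+2)) + e (Int.negSucc (k+1))
        rw [hw, S.apply_symm_apply]
        have : (-((k+1):ℤ)-1) = Int.negSucc (k+1) := by
          rw [Int.negSucc_eq]; push_cast; ring
        rw [this]
        abel
  have hu0 : u 0 = x0 := rfl
  have hPu : ∀ n : ℤ, Pi (u n) = x n := by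
    intro n
    induction n using Int.induction_on with
    | zero => rw [hu0, hx0]
    | succ k ih =>
        rw [hustep, map_add, heP, hcomm, ih]
        abel
    | pred k ih =>
        have hstep := hustep (-(k:ℤ)-1)
        have h1 : (-(k:ℤ)-1) + 1 = -(k:ℤ) := by ring
        rw [h1] at hstep
        have hS' : S (u (-(k:ℤ)-1)) = u (-(k:ℤ)) - e (-(k:ℤ)-1) := by
          rw [hstep]; abel
        have h2 : T (Pi (u (-(k:ℤ)-1))) = T (x (-(k:ℤ)-1)) := by
          rw [← hcomm, hS', map_sub, ih, heP, h1]
          abel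
        exact T.injective h2
  have hSu : ∀ n : ℤ, ‖S (u n) - u (n + 1)‖ ≤ δS := by
    intro n
    rw [hustep]
    have : S (u n) - (S (u n) + e n) = -(e n) := by abel
    rw [this, norm_neg]
    exact heN n
  obtain ⟨y, hy⟩ := hshad u hSu
  refine ⟨Pi y, fun n => ?_⟩
  have hkey : (T ^ n) (Pi y) - x n = Pi ((S ^ n) y - u n) := by
    rw [map_sub, commz S T Pi hcomm, hPu]
  calc ‖(T ^ n) (Pi y) - x n‖ = ‖Pi ((S ^ n) y - u n)‖ := by rw [hkey]
    _ ≤ ‖Pi‖ * ‖(S ^ n) y - u n‖ := Pi.le_opNorm _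
    _ ≤ (‖Pi‖ + 1) * ‖(S ^ n) y - u n‖ := by
        have := norm_nonneg ((S ^ n) y - u n); nlinarith
    _ < (‖Pi‖ + 1) * (ε / (‖Pi‖ + 1)) := by
        exact (mul_lt_mul_iff_right₀ hPi1).2 (hy n)
    _ = ε := by field_simp

end GHShadow
end
end
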